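/- Let α ≥ 1 be an ordinal and λ a limit ordinal. Then the λ-fold iterated Hessenberg product of α equals the ordinal power α^λ, i.e. α^{⊙λ} = α^λ. Moreover α^λ is additively closed: for all ordinals γ, δ < α^λ one has γ + δ < α^λ. -/

import Mathlib

universe u

namespace Ordinal
/-- Natural (Hessenberg) sum, as in the older Mathlib (removed since). -/
noncomputable def nadd : Ordinal.{u} → Ordinal.{u} → Ordinal.{u}
  | a, b =>
    max (⨆ x : Set.Iio a, Order.succ (nadd x.1 b)) (⨆ x : Set.Iio b, Order.succ (nadd a x.1))
termination_by a b => (a, b)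
decreasing_by all_goals cases x; decreasing_tactic
/-- Natural (Hessenberg) product, as in the older Mathlib (removed since). -/
noncomputable def nmul : Ordinal.{u} → Ordinal.{u} → Ordinal.{u}
  | a, b => sInf {c | ∀ a' < a, ∀ b' < b,
      nadd (nmul a' b) (nmul a b') < nadd c (nmul a' b')}
termination_by a b => (a, b)
end Ordinal

/-- The `β`-fold iterated Hessenberg (natural) product of `α`:
`α^{⊙0} = 1`, `α^{⊙(β+1)} = α^{⊙β} ⊙ α`, and
`α^{⊙λ} = sup_{β<λ} α^{⊙β}` for `λ` a limit ordinal. -/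
noncomputable def iterNmul (α β : Ordinal) : Ordinal :=
  Ordinal.limitRecOn β 1 (fun _ ih => Ordinal.nmul ih α)
    (fun b _ ih => ⨆ γ : Set.Iio b, ih γ.1 γ.2)

open Ordinal Order Set

infixl:65 " ♯ " => Ordinal.nadd
infixl:70 " ⨳ " => Ordinal.nmul

namespace Ordinal

section NatOps

variable {a b c d : Ordinal.{u}}

theorem nadd_def (a b : Ordinal.{u}) : a ♯ b =
    max (⨆ x : Set.Iio a, Order.succ (x.1 ♯ b)) (⨆ x : Set.Iio b, Order.succ (a ♯ x.1)) := by
  rw [nadd]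

theorem lt_nadd_iff : a < b ♯ c ↔ (∃ b' < b, a ≤ b' ♯ c) ∨ ∃ c' < c, a ≤ b ♯ c' := by
  rw [nadd_def]
  simp [Ordinal.lt_iSup_iff, Order.lt_succ_iff]

theorem nadd_le_iff : b ♯ c ≤ a ↔ (∀ b' < b, b' ♯ c < a) ∧ ∀ c' < c, b ♯ c' < a := by
  rw [← not_lt, lt_nadd_iff]
  simp only [not_or, not_exists, not_and, not_le]

theorem nadd_lt_nadd_left (h : b < c) (a : Ordinal.{u}) : a ♯ b < a ♯ c :=
  lt_nadd_iff.2 (Or.inr ⟨b, h, le_rfl⟩)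

theorem nadd_lt_nadd_right (h : b < c) (a : Ordinal.{u}) : b ♯ a < c ♯ a :=
  lt_nadd_iff.2 (Or.inl ⟨b, h, le_rfl⟩)

theorem nadd_le_nadd_left (h : b ≤ c) (a : Ordinal.{u}) : a ♯ b ≤ a ♯ c := by
  rcases h.lt_or_eq with h | rfl
  · exact (nadd_lt_nadd_left h a).le
  · exact le_rfl

theorem nadd_le_nadd_right (h : b ≤ c) (a : Ordinal.{u}) : b ♯ a ≤ c ♯ a := by
  rcases h.lt_or_eq with h | rfl
  · exact (nadd_lt_nadd_right h a).le
  · exact le_rfl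

theorem nadd_le_nadd (h₁ : a ≤ b) (h₂ : c ≤ d) : a ♯ c ≤ b ♯ d :=
  (nadd_le_nadd_right h₁ c).trans (nadd_le_nadd_left h₂ b)

theorem nadd_lt_nadd_of_lt_of_le (h₁ : a < b) (h₂ : c ≤ d) : a ♯ c < b ♯ d :=
  (nadd_lt_nadd_right h₁ c).trans_le (nadd_le_nadd_left h₂ b)

theorem nadd_lt_nadd_of_le_of_lt (h₁ : a ≤ b) (h₂ : c < d) : a ♯ c < b ♯ d :=
  (nadd_le_nadd_right h₁ c).trans_lt (nadd_lt_nadd_left h₂ b)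

theorem nadd_lt_nadd_iff_right : b ♯ a < c ♯ a ↔ b < c :=
  ⟨fun h => by
    by_contra h'
    exact (not_lt.2 (nadd_le_nadd_right (not_lt.1 h') a)) h,
   fun h => nadd_lt_nadd_right h a⟩

theorem nadd_le_nadd_iff_right : b ♯ a ≤ c ♯ a ↔ b ≤ c :=
  ⟨fun h => by
    by_contra h'
    exact (not_le.2 (nadd_lt_nadd_right (not_le.1 h') a)) h,
   fun h => nadd_le_nadd_right h a⟩

theorem nadd_comm (a b : Ordinal.{u}) : a ♯ b = b ♯ a := by
  induction a using Ordinal.induction generalizing b with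
  | _ a iha =>
  induction b using Ordinal.induction with
  | _ b ihb =>
  rw [nadd_def a b, nadd_def b a, max_comm]
  congr 1
  · congr 1
    funext x
    rw [ihb x.1 x.2]
  · congr 1
    funext x
    rw [iha x.1 x.2 b]

@[simp]
theorem nadd_zero (a : Ordinal.{u}) : a ♯ 0 = a := by
  induction a using Ordinal.induction with
  | _ a IH =>
  apply le_antisymm
  · rw [nadd_le_iff]
    refine ⟨fun b hb => ?_, fun c hc => absurd hc (not_lt.2 (zero_le : 0 ≤ c))⟩
    rwa [IH b hb]
  · refine le_of_forall_lt fun t ht => ?_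
    calc t = t ♯ 0 := (IH t ht).symm
      _ < a ♯ 0 := nadd_lt_nadd_right ht 0

@[simp]
theorem zero_nadd (a : Ordinal.{u}) : 0 ♯ a = a := by
  rw [nadd_comm, nadd_zero]

theorem le_self_nadd : a ≤ a ♯ b :=
  (nadd_zero a).symm.trans_le (nadd_le_nadd_left (zero_le : 0 ≤ b) a)

theorem le_nadd_self : a ≤ b ♯ a :=
  (zero_nadd a).symm.trans_le (nadd_le_nadd_right (zero_le : 0 ≤ b) a)

theorem nadd_succ (a b : Ordinal.{u}) : a ♯ succ b = succ (a ♯ b) := by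
  induction a using Ordinal.induction with
  | _ a IH =>
  apply le_antisymm
  · rw [nadd_le_iff]
    refine ⟨fun a' ha' => ?_, fun c hc => ?_⟩
    · rw [IH a' ha', Order.succ_lt_succ_iff]
      exact nadd_lt_nadd_right ha' b
    · exact Order.lt_succ_iff.2 (nadd_le_nadd_left (Order.lt_succ_iff.1 hc) a)
  · exact Order.succ_le_of_lt (nadd_lt_nadd_left (Order.lt_succ b) a)

theorem succ_nadd (a b : Ordinal.{u}) : succ a ♯ b = succ (a ♯ b) := by
  rw [nadd_comm, nadd_succ, nadd_comm]

theorem nadd_one (a : Ordinal.{u}) : a ♯ 1 = succ a := by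
  rw [← Ordinal.succ_zero, nadd_succ, nadd_zero]

theorem nadd_nat (a : Ordinal.{u}) (n : ℕ) : a ♯ n = a + n := by
  induction n with
  | zero => simp
  | succ n ih => rw [Nat.cast_succ, add_one_eq_succ, nadd_succ, ih, add_succ]

theorem nadd_assoc (a b c : Ordinal.{u}) : a ♯ b ♯ c = a ♯ (b ♯ c) := by
  induction a using Ordinal.induction generalizing b c with
  | _ a iha =>
  induction b using Ordinal.induction generalizing c with
  | _ b ihb =>
  induction c using Ordinal.induction with
  | _ c ihc =>
  apply le_antisymm
  · rw [nadd_le_iff]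
    refine ⟨fun x hx => ?_, fun c' hc' => ?_⟩
    · rcases lt_nadd_iff.1 hx with ⟨a', ha', hx'⟩ | ⟨b', hb', hx'⟩
      · calc x ♯ c ≤ a' ♯ b ♯ c := nadd_le_nadd_right hx' c
          _ = a' ♯ (b ♯ c) := iha a' ha' b c
          _ < a ♯ (b ♯ c) := nadd_lt_nadd_right ha' _
      · calc x ♯ c ≤ a ♯ b' ♯ c := nadd_le_nadd_right hx' c
          _ = a ♯ (b' ♯ c) := ihb b' hb' c
          _ < a ♯ (b ♯ c) := nadd_lt_nadd_left (nadd_lt_nadd_right hb' c) a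
    · rw [ihc c' hc']
      exact nadd_lt_nadd_left (nadd_lt_nadd_left hc' b) a
  · rw [nadd_le_iff]
    refine ⟨fun a' ha' => ?_, fun y hy => ?_⟩
    · rw [← iha a' ha' b c]
      exact nadd_lt_nadd_right (nadd_lt_nadd_right ha' b) c
    · rcases lt_nadd_iff.1 hy with ⟨b', hb', hy'⟩ | ⟨c', hc', hy'⟩
      · calc a ♯ y ≤ a ♯ (b' ♯ c) := nadd_le_nadd_left hy' a
          _ = a ♯ b' ♯ c := (ihb b' hb' c).symm
          _ < a ♯ b ♯ c := nadd_lt_nadd_right (nadd_lt_nadd_left hb' a) c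
      · calc a ♯ y ≤ a ♯ (b ♯ c') := nadd_le_nadd_left hy' a
          _ = a ♯ b ♯ c' := (ihc c' hc').symm
          _ < a ♯ b ♯ c := nadd_lt_nadd_left hc' _

instance : Std.Associative Ordinal.nadd := ⟨nadd_assoc⟩

instance : Std.Commutative Ordinal.nadd := ⟨nadd_comm⟩

theorem cancel_lt {x y z x' y' : Ordinal.{u}} (h : x' < y') (hx : x ♯ z = x') (hy : y' = y ♯ z) :
    x < y := by
  subst hx hy
  exact nadd_lt_nadd_iff_right.1 h

theorem cancel_le {x y z x' y' : Ordinal.{u}} (h : x' ≤ y') (hx : x ♯ z = x') (hy : y' = y ♯ z) :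
    x ≤ y := by
  subst hx hy
  exact nadd_le_nadd_iff_right.1 h

theorem add_le_nadd (a b : Ordinal.{u}) : a + b ≤ a ♯ b := by
  induction b using Ordinal.induction with
  | _ b IH =>
  refine le_of_forall_lt fun t ht => ?_
  rcases lt_or_ge t a with h | h
  · exact h.trans_le le_self_nadd
  · have e := Ordinal.add_sub_cancel_of_le h
    have hs : t - a < b := by
      rw [← e] at ht
      exact lt_of_add_lt_add_left ht
    calc t = a + (t - a) := e.symm
      _ ≤ a ♯ (t - a) := IH _ hs
      _ < a ♯ b := nadd_lt_nadd_left hs a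

theorem nmul_def (a b : Ordinal.{u}) :
    a ⨳ b = sInf {c | ∀ a' < a, ∀ b' < b, a' ⨳ b ♯ a ⨳ b' < c ♯ a' ⨳ b'} := by
  rw [nmul]

theorem nmul_nonempty (a b : Ordinal.{u}) :
    {c : Ordinal.{u} | ∀ a' < a, ∀ b' < b, a' ⨳ b ♯ a ⨳ b' < c ♯ a' ⨳ b'}.Nonempty := by
  refine ⟨⨆ p : Set.Iio a × Set.Iio b, succ (p.1.1 ⨳ b ♯ a ⨳ p.2.1), fun a' ha' b' hb' => ?_⟩
  refine (Order.lt_succ _).trans_le (le_trans ?_ le_self_nadd)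
  exact Ordinal.le_iSup (fun p : Set.Iio a × Set.Iio b => succ (p.1.1 ⨳ b ♯ a ⨳ p.2.1))
    ⟨⟨a', ha'⟩, ⟨b', hb'⟩⟩

theorem nmul_nadd_lt {a' b' : Ordinal.{u}} (ha : a' < a) (hb : b' < b) :
    a' ⨳ b ♯ a ⨳ b' < a ⨳ b ♯ a' ⨳ b' := by
  rw [nmul_def a b]
  exact csInf_mem (nmul_nonempty a b) a' ha b' hb

theorem nmul_nadd_le {a' b' : Ordinal.{u}} (ha : a' ≤ a) (hb : b' ≤ b) :
    a' ⨳ b ♯ a ⨳ b' ≤ a ⨳ b ♯ a' ⨳ b' := by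
  rcases ha.lt_or_eq with ha | rfl
  · rcases hb.lt_or_eq with hb | rfl
    · exact (nmul_nadd_lt ha hb).le
    · rw [nadd_comm]
  · exact le_rfl

theorem lt_nmul_iff : c < a ⨳ b ↔ ∃ a' < a, ∃ b' < b, c ♯ a' ⨳ b' ≤ a' ⨳ b ♯ a ⨳ b' := by
  refine ⟨fun h => ?_, ?_⟩
  · rw [nmul_def] at h
    have := notMem_of_lt_csInf h ⟨0, fun _ _ => zero_le⟩
    simp only [Set.mem_setOf_eq] at this
    push_neg at this
    exact this
  · rintro ⟨a', ha, b', hb, h⟩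
    exact nadd_lt_nadd_iff_right.1 (h.trans_lt (nmul_nadd_lt ha hb))

theorem nmul_le_iff : a ⨳ b ≤ c ↔ ∀ a' < a, ∀ b' < b, a' ⨳ b ♯ a ⨳ b' < c ♯ a' ⨳ b' := by
  rw [← not_iff_not]
  push_neg
  exact lt_nmul_iff

theorem nmul_comm (a b : Ordinal.{u}) : a ⨳ b = b ⨳ a := by
  induction a using Ordinal.induction generalizing b with
  | _ a iha =>
  induction b using Ordinal.induction with
  | _ b ihb =>
  rw [nmul_def a b, nmul_def b a]
  congr 1
  ext x
  simp only [Set.mem_setOf_eq]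
  constructor
  · intro H d hd c hc
    have := H c hc d hd
    rwa [iha c hc b, ihb d hd, iha c hc d, nadd_comm (b ⨳ c)] at this
  · intro H c hc d hd
    have := H d hd c hc
    rwa [iha c hc b, ihb d hd, iha c hc d, nadd_comm (b ⨳ c)]

@[simp]
theorem nmul_zero (a : Ordinal.{u}) : a ⨳ 0 = 0 := by
  rw [← nonpos_iff_eq_zero, nmul_le_iff]
  exact fun _ _ b hb => absurd hb (not_lt.2 (zero_le : 0 ≤ b))

@[simp]
theorem zero_nmul (a : Ordinal.{u}) : 0 ⨳ a = 0 := by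
  rw [nmul_comm, nmul_zero]

@[simp]
theorem nmul_one (a : Ordinal.{u}) : a ⨳ 1 = a := by
  induction a using Ordinal.induction with
  | _ a IH =>
  apply le_antisymm
  · rw [nmul_le_iff]
    intro a' ha' b' hb'
    rw [Ordinal.lt_one_iff_zero] at hb'
    subst hb'
    simp only [IH a' ha', nmul_zero, nadd_zero]
    exact ha'
  · refine le_of_forall_lt fun t ht => lt_nmul_iff.2 ⟨t, ht, 0, zero_lt_one, ?_⟩
    simp only [IH t ht, nmul_zero, nadd_zero, le_refl]

@[simp]
theorem one_nmul (a : Ordinal.{u}) : 1 ⨳ a = a := by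
  rw [nmul_comm, nmul_one]

theorem nmul_lt_nmul_of_pos_left (h₁ : a < b) (h₂ : 0 < c) : c ⨳ a < c ⨳ b :=
  lt_nmul_iff.2 ⟨0, h₂, a, h₁, by simp only [zero_nmul, nadd_zero, zero_nadd, le_refl]⟩

theorem nmul_lt_nmul_of_pos_right (h₁ : a < b) (h₂ : 0 < c) : a ⨳ c < b ⨳ c := by
  rw [nmul_comm a, nmul_comm b]
  exact nmul_lt_nmul_of_pos_left h₁ h₂

theorem nmul_le_nmul_left (h : a ≤ b) (c : Ordinal.{u}) : c ⨳ a ≤ c ⨳ b := by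
  rcases h.lt_or_eq with h | rfl
  · rcases eq_zero_or_pos c with rfl | hc
    · simp only [zero_nmul, le_refl]
    · exact (nmul_lt_nmul_of_pos_left h hc).le
  · exact le_rfl

theorem nmul_le_nmul_right (h : a ≤ b) (c : Ordinal.{u}) : a ⨳ c ≤ b ⨳ c := by
  rw [nmul_comm a, nmul_comm b]
  exact nmul_le_nmul_left h c

theorem nmul_nadd (a b c : Ordinal.{u}) : a ⨳ (b ♯ c) = a ⨳ b ♯ a ⨳ c := by
  induction a using Ordinal.induction generalizing b c with
  | _ a iha =>
  induction b using Ordinal.induction generalizing c with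
  | _ b ihb =>
  induction c using Ordinal.induction with
  | _ c ihc =>
  apply le_antisymm
  · rw [nmul_le_iff]
    intro a' ha d hd
    rw [iha a' ha b c]
    rcases lt_nadd_iff.1 hd with ⟨b', hb, hd⟩ | ⟨c', hc, hd⟩
    · have := nadd_lt_nadd_of_lt_of_le (nmul_nadd_lt ha hb) (nmul_nadd_le ha.le hd)
      rw [iha a' ha b' c, ihb b' hb c] at this
      exact cancel_lt (z := a ⨳ b' ♯ a' ⨳ b') this (by ac_rfl) (by ac_rfl)
    · have := nadd_lt_nadd_of_lt_of_le (nmul_nadd_lt ha hc) (nmul_nadd_le ha.le hd)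
      rw [iha a' ha b c', ihc c' hc] at this
      exact cancel_lt (z := a ⨳ c' ♯ a' ⨳ c') this (by ac_rfl) (by ac_rfl)
  · rw [nadd_le_iff]
    constructor
    · intro d hd
      rcases lt_nmul_iff.1 hd with ⟨a', ha, b', hb, hd⟩
      have := nadd_lt_nadd_of_le_of_lt hd (nmul_nadd_lt ha (nadd_lt_nadd_right hb c))
      rw [iha a' ha b c, ihb b' hb c, iha a' ha b' c] at this
      exact cancel_lt (z := a' ⨳ b' ♯ a' ⨳ b ♯ a' ⨳ c ♯ a ⨳ b') this (by ac_rfl) (by ac_rfl)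
    · intro d hd
      rcases lt_nmul_iff.1 hd with ⟨a', ha, c', hc, hd⟩
      have := nadd_lt_nadd_of_le_of_lt hd (nmul_nadd_lt ha (nadd_lt_nadd_left hc b))
      rw [iha a' ha b c, ihc c' hc, iha a' ha b c'] at this
      exact cancel_lt (z := a' ⨳ c' ♯ a' ⨳ b ♯ a' ⨳ c ♯ a ⨳ c') this (by ac_rfl) (by ac_rfl)

theorem nadd_nmul (a b c : Ordinal.{u}) : (a ♯ b) ⨳ c = a ⨳ c ♯ b ⨳ c := by
  rw [nmul_comm, nmul_nadd, nmul_comm c, nmul_comm c]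

theorem nmul_add_one (a b : Ordinal.{u}) : a ⨳ (b + 1) = a ⨳ b ♯ a := by
  rw [add_one_eq_succ, ← nadd_one, nmul_nadd, nmul_one]

theorem mul_le_nmul (a b : Ordinal.{u}) : a * b ≤ a ⨳ b := by
  induction b using Ordinal.induction with
  | _ b IH =>
  rcases eq_or_ne a 0 with rfl | ha
  · rw [zero_mul]
    exact zero_le
  refine le_of_forall_lt fun t ht => ?_
  have hq : t / a < b := (Ordinal.div_lt ha).2 ht
  calc t = a * (t / a) + t % a := (div_add_mod t a).symm
    _ ≤ a ⨳ (t / a) + t % a := add_le_add_left (IH _ hq) _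
    _ ≤ a ⨳ (t / a) ♯ t % a := add_le_nadd _ _
    _ < a ⨳ (t / a) ♯ a := nadd_lt_nadd_left (mod_lt t ha) _
    _ = a ⨳ (t / a + 1) := (nmul_add_one a _).symm
    _ ≤ a ⨳ b := nmul_le_nmul_left (Order.add_one_le_of_lt hq) a

theorem lt_nmul_iff₃ (h : d < a ⨳ b ⨳ c) : ∃ a' < a, ∃ b' < b, ∃ c' < c,
    d ♯ a' ⨳ b' ⨳ c ♯ a' ⨳ b ⨳ c' ♯ a ⨳ b' ⨳ c' ≤
      a' ⨳ b ⨳ c ♯ a ⨳ b' ⨳ c ♯ a ⨳ b ⨳ c' ♯ a' ⨳ b' ⨳ c' := by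
  rcases lt_nmul_iff.1 h with ⟨e, he, c', hc, H₁⟩
  rcases lt_nmul_iff.1 he with ⟨a', ha, b', hb, H₂⟩
  refine ⟨a', ha, b', hb, c', hc, ?_⟩
  have H₃ := nmul_nadd_le H₂ hc.le
  simp only [nadd_nmul] at H₃
  have := nadd_le_nadd H₁ H₃
  exact cancel_le (z := e ⨳ c' ♯ e ⨳ c) this (by ac_rfl) (by ac_rfl)

theorem nmul_assoc (a b c : Ordinal.{u}) : a ⨳ b ⨳ c = a ⨳ (b ⨳ c) := by
  suffices H : ∀ s : Ordinal.{u}, ∀ a b c : Ordinal.{u}, a ♯ b ♯ c = s →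
      a ⨳ b ⨳ c = a ⨳ (b ⨳ c) from H _ a b c rfl
  intro s
  induction s using Ordinal.induction with
  | _ s IH =>
  intro a b c hs
  subst hs
  have dir : ∀ x y z : Ordinal.{u}, x ♯ y ♯ z = a ♯ b ♯ c → x ⨳ y ⨳ z ≤ x ⨳ (y ⨳ z) := by
    intro x y z hxyz
    have key : ∀ x' y' z' : Ordinal.{u}, x' ≤ x → y' ≤ y → z' ≤ z →
        (x' < x ∨ y' < y ∨ z' < z) → x' ⨳ y' ⨳ z' = x' ⨳ (y' ⨳ z') := by
      intro x' y' z' hx hy hz h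
      refine IH _ ?_ x' y' z' rfl
      rw [← hxyz]
      rcases h with h | h | h
      · exact nadd_lt_nadd_of_lt_of_le (nadd_lt_nadd_of_lt_of_le h hy) hz
      · exact nadd_lt_nadd_of_lt_of_le (nadd_lt_nadd_of_le_of_lt hx h) hz
      · exact nadd_lt_nadd_of_le_of_lt (nadd_le_nadd hx hy) h
    by_contra hlt
    rw [not_le] at hlt
    obtain ⟨x', hx, y', hy, z', hz, H⟩ := lt_nmul_iff₃ hlt
    rw [key x' y z hx.le le_rfl le_rfl (Or.inl hx),
      key x y' z le_rfl hy.le le_rfl (Or.inr (Or.inl hy)),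
      key x y z' le_rfl le_rfl hz.le (Or.inr (Or.inr hz)),
      key x' y' z hx.le hy.le le_rfl (Or.inl hx),
      key x' y z' hx.le le_rfl hz.le (Or.inl hx),
      key x y' z' le_rfl hy.le hz.le (Or.inr (Or.inl hy)),
      key x' y' z' hx.le hy.le hz.le (Or.inl hx)] at H
    have L := nmul_nadd_lt hx (nmul_nadd_lt hy hz)
    simp only [nmul_nadd] at L
    exact lt_irrefl _ ((H.trans_eq (by ac_rfl)).trans_lt (L.trans_eq (by ac_rfl)))
  apply le_antisymm (dir a b c rfl)
  have := dir c b a (by ac_rfl)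
  rwa [nmul_comm (c ⨳ b) a, nmul_comm c b, nmul_comm c (b ⨳ a), nmul_comm b a] at this

end NatOps

end Ordinal

namespace IterNmulProof

/-- Split an ordinal `x < ω^e·ω` as `ω^e·n + r` with `n : ℕ`, `r < ω^e`. -/
theorem split {x e : Ordinal} (hx : x < ω ^ e * ω) :
    ∃ n : ℕ, ∃ r < ω ^ e, x = ω ^ e * n + r := by
  have hW : (ω : Ordinal) ^ e ≠ 0 := opow_ne_zero _ omega0_ne_zero
  have hn : x / ω ^ e < ω := (Ordinal.div_lt hW).2 hx
  obtain ⟨n, hn⟩ := lt_omega0.1 hn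
  exact ⟨n, x % ω ^ e, mod_lt _ hW, by rw [← hn, div_add_mod]⟩

/-- Joint key lemma: `ω^k` is closed under natural addition, and natural addition
respects the `ω^k`-base normal form. -/
theorem nadd_key : ∀ k : Ordinal,
    (∀ a b, a < ω ^ k → b < ω ^ k → a ♯ b < ω ^ k) ∧
    (∀ c d r s, r < ω ^ k → s < ω ^ k →
      (ω ^ k * c + r) ♯ (ω ^ k * d + s) = ω ^ k * (c ♯ d) + (r ♯ s)) := by
  intro k
  induction k using Ordinal.induction with
  | _ k IH =>
  have hW : (0 : Ordinal) < ω ^ k := opow_pos _ omega0_pos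
  have hW0 : (ω : Ordinal) ^ k ≠ 0 := hW.ne'
  have part1 : ∀ a b, a < ω ^ k → b < ω ^ k → a ♯ b < ω ^ k := by
    intro a b ha hb
    rcases eq_or_ne a 0 with rfl | ha0
    · rwa [zero_nadd]
    rcases eq_or_ne b 0 with rfl | hb0
    · rwa [nadd_zero]
    set j := max (log ω a) (log ω b) with hj
    have hjk : j < k := by
      apply max_lt
      · exact (lt_opow_iff_log_lt one_lt_omega0 ha0).1 ha
      · exact (lt_opow_iff_log_lt one_lt_omega0 hb0).1 hb
    obtain ⟨IHj1, IHj2⟩ := IH j hjk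
    have bound : ∀ x : Ordinal, x ≠ 0 → log ω x ≤ j → x < ω ^ j * ω := by
      intro x hx0 hxj
      calc x < ω ^ succ (log ω x) := lt_opow_succ_log_self one_lt_omega0 x
        _ ≤ ω ^ succ j := opow_le_opow_right omega0_pos (succ_le_succ hxj)
        _ = ω ^ j * ω := by rw [opow_succ]
    obtain ⟨m, r, hrj, hae⟩ := split (bound a ha0 (le_max_left _ _))
    obtain ⟨n, s, hsj, hbe⟩ := split (bound b hb0 (le_max_right _ _))
    have hmn : ((m : Ordinal) ♯ (n : Ordinal)) = ((m + n : ℕ) : Ordinal) := by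
      rw [nadd_nat, Nat.cast_add]
    have : a ♯ b = ω ^ j * ((m + n : ℕ) : Ordinal) + (r ♯ s) := by
      rw [hae, hbe, IHj2 _ _ _ _ hrj hsj, hmn]
    rw [this]
    calc ω ^ j * ((m + n : ℕ) : Ordinal) + (r ♯ s)
        < ω ^ j * ((m + n : ℕ) : Ordinal) + ω ^ j := by
          exact add_lt_add_right (IHj1 _ _ hrj hsj) _
      _ = ω ^ j * (((m + n : ℕ) : Ordinal) + 1) := by rw [mul_add, mul_one]
      _ ≤ ω ^ j * ω := by
          apply mul_le_mul_right
          have : (((m + n : ℕ) : Ordinal) + 1) = ((m + n + 1 : ℕ) : Ordinal) := by push_cast; ring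
          rw [this]
          exact (nat_lt_omega0 _).le
      _ = ω ^ succ j := by rw [opow_succ]
      _ ≤ ω ^ k := opow_le_opow_right omega0_pos (succ_le_of_lt hjk)
  refine ⟨part1, ?_⟩
  intro c
  induction c using Ordinal.induction with
  | _ c IHc =>
  intro d
  induction d using Ordinal.induction with
  | _ d IHd =>
  intro r
  induction r using Ordinal.induction with
  | _ r IHr =>
  intro s
  induction s using Ordinal.induction with
  | _ s IHs =>
  intro hr hs
  -- decomposition helper
  have decomp : ∀ {u' : Ordinal} (c₀ r₀ : Ordinal), u' < ω ^ k * c₀ + r₀ →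
      (∃ r' < r₀, u' = ω ^ k * c₀ + r') ∨
      (∃ c' < c₀, ∃ ρ < ω ^ k, u' = ω ^ k * c' + ρ) := by
    intro u' c₀ r₀ hu'
    rcases le_or_gt (ω ^ k * c₀) u' with h | h
    · left
      refine ⟨u' - ω ^ k * c₀, ?_, (Ordinal.add_sub_cancel_of_le h).symm⟩
      have := Ordinal.add_sub_cancel_of_le h
      rw [← this] at hu'
      exact lt_of_add_lt_add_left hu'
    · right
      exact ⟨u' / ω ^ k, (Ordinal.div_lt hW0).2 h, u' % ω ^ k, mod_lt _ hW0,
        (div_add_mod _ _).symm⟩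
  apply le_antisymm
  · rw [nadd_le_iff]
    constructor
    · intro u' hu'
      rcases decomp c r hu' with ⟨r', hr'r, rfl⟩ | ⟨c', hc'c, ρ, hρ, rfl⟩
      · rw [IHr r' hr'r s (hr'r.trans hr) hs]
        exact add_lt_add_right (nadd_lt_nadd_right hr'r s) _
      · rw [IHc c' hc'c d ρ s hρ hs]
        calc ω ^ k * (c' ♯ d) + (ρ ♯ s) < ω ^ k * (c' ♯ d) + ω ^ k :=
              add_lt_add_right (part1 _ _ hρ hs) _
          _ = ω ^ k * succ (c' ♯ d) := by rw [mul_succ]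
          _ ≤ ω ^ k * (c ♯ d) := mul_le_mul_right (succ_le_of_lt (nadd_lt_nadd_right hc'c d)) _
          _ ≤ ω ^ k * (c ♯ d) + (r ♯ s) := le_self_add
    · intro v' hv'
      rcases decomp d s hv' with ⟨s', hs's, rfl⟩ | ⟨d', hd'd, σ, hσ, rfl⟩
      · rw [IHs s' hs's hr (hs's.trans hs)]
        exact add_lt_add_right (nadd_lt_nadd_left hs's r) _
      · rw [IHd d' hd'd r σ hr hσ]
        calc ω ^ k * (c ♯ d') + (r ♯ σ) < ω ^ k * (c ♯ d') + ω ^ k :=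
              add_lt_add_right (part1 _ _ hr hσ) _
          _ = ω ^ k * succ (c ♯ d') := by rw [mul_succ]
          _ ≤ ω ^ k * (c ♯ d) := mul_le_mul_right (succ_le_of_lt (nadd_lt_nadd_left hd'd c)) _
          _ ≤ ω ^ k * (c ♯ d) + (r ♯ s) := le_self_add
  · -- ≥ direction
    apply le_of_forall_lt
    intro t ht
    -- helper: for c' < c, ω^k*(c'♯d) + ω^k ≤ u ♯ v, and symmetric
    have help1 : ∀ c' < c, ω ^ k * (c' ♯ d) + ω ^ k ≤ (ω ^ k * c + r) ♯ (ω ^ k * d + s) := by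
      intro c' hc'c
      apply le_of_forall_lt
      intro z hz
      have key : ∀ ρ < ω ^ k, ω ^ k * (c' ♯ d) + ρ < (ω ^ k * c + r) ♯ (ω ^ k * d + s) := by
        intro ρ hρ
        have h1 : ω ^ k * (c' ♯ d) + ρ ≤ ω ^ k * (c' ♯ d) + (ρ ♯ s) :=
          add_le_add_right le_self_nadd _
        have h2 : (ω ^ k * c' + ρ) ♯ (ω ^ k * d + s) = ω ^ k * (c' ♯ d) + (ρ ♯ s) :=
          IHc c' hc'c d ρ s hρ hs
        have h3 : ω ^ k * c' + ρ < ω ^ k * c + r := by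
          calc ω ^ k * c' + ρ < ω ^ k * c' + ω ^ k := add_lt_add_right hρ _
            _ = ω ^ k * succ c' := by rw [mul_succ]
            _ ≤ ω ^ k * c := mul_le_mul_right (succ_le_of_lt hc'c) _
            _ ≤ ω ^ k * c + r := le_self_add
        calc ω ^ k * (c' ♯ d) + ρ ≤ ω ^ k * (c' ♯ d) + (ρ ♯ s) := h1
          _ = (ω ^ k * c' + ρ) ♯ (ω ^ k * d + s) := h2.symm
          _ < (ω ^ k * c + r) ♯ (ω ^ k * d + s) := nadd_lt_nadd_right h3 _
      rcases le_or_gt (ω ^ k * (c' ♯ d)) z with h | h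
      · have hze : ω ^ k * (c' ♯ d) + (z - ω ^ k * (c' ♯ d)) = z :=
          Ordinal.add_sub_cancel_of_le h
        have hρ : z - ω ^ k * (c' ♯ d) < ω ^ k := by
          rw [← hze] at hz
          exact lt_of_add_lt_add_left hz
        rw [← hze]
        exact key _ hρ
      · exact h.trans_le ((le_self_add).trans (key 0 hW).le)
    have help2 : ∀ d' < d, ω ^ k * (c ♯ d') + ω ^ k ≤ (ω ^ k * c + r) ♯ (ω ^ k * d + s) := by
      intro d' hd'd
      apply le_of_forall_lt
      intro z hz
      have key : ∀ σ < ω ^ k, ω ^ k * (c ♯ d') + σ < (ω ^ k * c + r) ♯ (ω ^ k * d + s) := by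
        intro σ hσ
        have h1 : ω ^ k * (c ♯ d') + σ ≤ ω ^ k * (c ♯ d') + (r ♯ σ) :=
          add_le_add_right le_nadd_self _
        have h2 : (ω ^ k * c + r) ♯ (ω ^ k * d' + σ) = ω ^ k * (c ♯ d') + (r ♯ σ) :=
          IHd d' hd'd r σ hr hσ
        have h3 : ω ^ k * d' + σ < ω ^ k * d + s := by
          calc ω ^ k * d' + σ < ω ^ k * d' + ω ^ k := add_lt_add_right hσ _
            _ = ω ^ k * succ d' := by rw [mul_succ]
            _ ≤ ω ^ k * d := mul_le_mul_right (succ_le_of_lt hd'd) _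
            _ ≤ ω ^ k * d + s := le_self_add
        calc ω ^ k * (c ♯ d') + σ ≤ ω ^ k * (c ♯ d') + (r ♯ σ) := h1
          _ = (ω ^ k * c + r) ♯ (ω ^ k * d' + σ) := h2.symm
          _ < (ω ^ k * c + r) ♯ (ω ^ k * d + s) := nadd_lt_nadd_left h3 _
      rcases le_or_gt (ω ^ k * (c ♯ d')) z with h | h
      · have hze : ω ^ k * (c ♯ d') + (z - ω ^ k * (c ♯ d')) = z :=
          Ordinal.add_sub_cancel_of_le h
        have hσ : z - ω ^ k * (c ♯ d') < ω ^ k := by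
          rw [← hze] at hz
          exact lt_of_add_lt_add_left hz
        rw [← hze]
        exact key _ hσ
      · exact h.trans_le ((le_self_add).trans (key 0 hW).le)
    rcases le_or_gt (ω ^ k * (c ♯ d)) t with h2 | h1
    · -- t = ω^k*(c♯d) + f with f < r♯s
      have hte : ω ^ k * (c ♯ d) + (t - ω ^ k * (c ♯ d)) = t := Ordinal.add_sub_cancel_of_le h2
      have hf : t - ω ^ k * (c ♯ d) < r ♯ s := by
        rw [← hte] at ht
        exact lt_of_add_lt_add_left ht
      rcases lt_nadd_iff.1 hf with ⟨r', hr'r, hfle⟩ | ⟨s', hs's, hfle⟩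
      · calc t = ω ^ k * (c ♯ d) + (t - ω ^ k * (c ♯ d)) := hte.symm
          _ ≤ ω ^ k * (c ♯ d) + (r' ♯ s) := add_le_add_right hfle _
          _ = (ω ^ k * c + r') ♯ (ω ^ k * d + s) := (IHr r' hr'r s (hr'r.trans hr) hs).symm
          _ < (ω ^ k * c + r) ♯ (ω ^ k * d + s) :=
              nadd_lt_nadd_right (add_lt_add_right hr'r _) _
      · calc t = ω ^ k * (c ♯ d) + (t - ω ^ k * (c ♯ d)) := hte.symm
          _ ≤ ω ^ k * (c ♯ d) + (r ♯ s') := add_le_add_right hfle _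
          _ = (ω ^ k * c + r) ♯ (ω ^ k * d + s') := (IHs s' hs's hr (hs's.trans hs)).symm
          _ < (ω ^ k * c + r) ♯ (ω ^ k * d + s) :=
              nadd_lt_nadd_left (add_lt_add_right hs's _) _
    · -- t < ω^k * (c♯d)
      have hG : c ♯ d ≠ 0 := by
        rintro hG0
        rw [hG0, mul_zero] at h1
        exact (not_lt.2 (zero_le : 0 ≤ t) h1).elim
      have hE' : t / ω ^ k < c ♯ d := (Ordinal.div_lt hW0).2 h1
      have ht2 : t < ω ^ k * succ (t / ω ^ k) := lt_mul_succ_div t hW0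
      rcases lt_nadd_iff.1 hE' with ⟨c', hc'c, hEle⟩ | ⟨d', hd'd, hEle⟩
      · calc t < ω ^ k * succ (t / ω ^ k) := ht2
          _ = ω ^ k * (t / ω ^ k) + ω ^ k := by rw [mul_succ]
          _ ≤ ω ^ k * (c' ♯ d) + ω ^ k := add_le_add_left (mul_le_mul_right hEle _) _
          _ ≤ (ω ^ k * c + r) ♯ (ω ^ k * d + s) := help1 c' hc'c
      · calc t < ω ^ k * succ (t / ω ^ k) := ht2
          _ = ω ^ k * (t / ω ^ k) + ω ^ k := by rw [mul_succ]
          _ ≤ ω ^ k * (c ♯ d') + ω ^ k := add_le_add_left (mul_le_mul_right hEle _) _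
          _ ≤ (ω ^ k * c + r) ♯ (ω ^ k * d + s) := help2 d' hd'd


/-- `ω^c ⨳ n = ω^c * n` for natural `n`. -/
theorem nmul_opow_nat (c : Ordinal) (n : ℕ) : ω ^ c ⨳ (n : Ordinal) = ω ^ c * n := by
  induction n with
  | zero => simp [nmul_zero]
  | succ n ih =>
    have h1 : ((n + 1 : ℕ) : Ordinal) = (n : Ordinal) + 1 := by push_cast; ring
    rw [h1, nmul_add_one, ih]
    have := (nadd_key c).2 n 1 0 0 (opow_pos _ omega0_pos) (opow_pos _ omega0_pos)
    simp only [add_zero, mul_one, nadd_zero, nadd_one] at this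
    rw [this, ← add_one_eq_succ]

/-- natural product of naturals is the natural product. -/
theorem nmul_nat_nat (m n : ℕ) : (m : Ordinal) ⨳ (n : Ordinal) = ((m * n : ℕ) : Ordinal) := by
  induction n with
  | zero => simp [nmul_zero]
  | succ n ih =>
    have h1 : ((n + 1 : ℕ) : Ordinal) = (n : Ordinal) + 1 := by push_cast; ring
    rw [h1, nmul_add_one, ih, nadd_nat]
    norm_cast

/-- Key identity: `ω^a ⨳ ω^b = ω^(a ♯ b)`. -/
theorem nmul_omega0_opow : ∀ a b : Ordinal, ω ^ a ⨳ ω ^ b = ω ^ (a ♯ b) := by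
  intro a
  induction a using Ordinal.induction with
  | _ a IHa =>
  intro b
  induction b using Ordinal.induction with
  | _ b IHb =>
  rcases eq_or_ne a 0 with rfl | ha0
  · rw [opow_zero, one_nmul, zero_nadd]
  rcases eq_or_ne b 0 with rfl | hb0
  · rw [opow_zero, nmul_one, nadd_zero]
  -- both positive
  have claim1 : ∀ x < ω ^ a, x ⨳ ω ^ b < ω ^ (a ♯ b) := by
    intro x hx
    rcases eq_or_ne x 0 with rfl | hx0
    · rw [zero_nmul]; exact opow_pos _ omega0_pos
    have hlog : log ω x < a := (lt_opow_iff_log_lt one_lt_omega0 hx0).1 hx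
    set a₁ := log ω x
    have hxa : x < ω ^ a₁ * ω := by
      calc x < ω ^ succ a₁ := lt_opow_succ_log_self one_lt_omega0 x
        _ = ω ^ a₁ * ω := by rw [opow_succ]
    obtain ⟨m, r, hr, hxe⟩ := split hxa
    have hxm : x < ω ^ a₁ * ((m + 1 : ℕ) : Ordinal) := by
      rw [hxe]
      push_cast
      rw [mul_add, mul_one]
      exact add_lt_add_right hr _
    have step : (ω ^ a₁ * ((m + 1 : ℕ) : Ordinal)) ⨳ ω ^ b = ω ^ (a₁ ♯ b) * ((m + 1 : ℕ) : Ordinal) := by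
      rw [← nmul_opow_nat, nmul_comm (ω ^ a₁) _, nmul_assoc, IHa a₁ hlog b,
        nmul_comm _ (ω ^ (a₁ ♯ b)), nmul_opow_nat]
    calc x ⨳ ω ^ b < (ω ^ a₁ * ((m + 1 : ℕ) : Ordinal)) ⨳ ω ^ b :=
          nmul_lt_nmul_of_pos_right hxm (opow_pos _ omega0_pos)
      _ = ω ^ (a₁ ♯ b) * ((m + 1 : ℕ) : Ordinal) := step
      _ < ω ^ (a₁ ♯ b) * ω := (mul_lt_mul_iff_of_pos_left (opow_pos _ omega0_pos)).2 (nat_lt_omega0 _)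
      _ = ω ^ succ (a₁ ♯ b) := by rw [opow_succ]
      _ = ω ^ (succ a₁ ♯ b) := by rw [succ_nadd]
      _ ≤ ω ^ (a ♯ b) := opow_le_opow_right omega0_pos
          (nadd_le_nadd_right (succ_le_of_lt hlog) b)
  have claim2 : ∀ y < ω ^ b, ω ^ a ⨳ y < ω ^ (a ♯ b) := by
    intro y hy
    rcases eq_or_ne y 0 with rfl | hy0
    · rw [nmul_zero]; exact opow_pos _ omega0_pos
    have hlog : log ω y < b := (lt_opow_iff_log_lt one_lt_omega0 hy0).1 hy
    set b₁ := log ω y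
    have hyb : y < ω ^ b₁ * ω := by
      calc y < ω ^ succ b₁ := lt_opow_succ_log_self one_lt_omega0 y
        _ = ω ^ b₁ * ω := by rw [opow_succ]
    obtain ⟨m, s, hs, hye⟩ := split hyb
    have hym : y < ω ^ b₁ * ((m + 1 : ℕ) : Ordinal) := by
      rw [hye]
      push_cast
      rw [mul_add, mul_one]
      exact add_lt_add_right hs _
    have step : ω ^ a ⨳ (ω ^ b₁ * ((m + 1 : ℕ) : Ordinal)) = ω ^ (a ♯ b₁) * ((m + 1 : ℕ) : Ordinal) := by
      rw [← nmul_opow_nat, ← nmul_assoc, IHb b₁ hlog, nmul_opow_nat]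
    calc ω ^ a ⨳ y < ω ^ a ⨳ (ω ^ b₁ * ((m + 1 : ℕ) : Ordinal)) :=
          nmul_lt_nmul_of_pos_left hym (opow_pos _ omega0_pos)
      _ = ω ^ (a ♯ b₁) * ((m + 1 : ℕ) : Ordinal) := step
      _ < ω ^ (a ♯ b₁) * ω := (mul_lt_mul_iff_of_pos_left (opow_pos _ omega0_pos)).2 (nat_lt_omega0 _)
      _ = ω ^ succ (a ♯ b₁) := by rw [opow_succ]
      _ = ω ^ (a ♯ succ b₁) := by rw [nadd_succ]
      _ ≤ ω ^ (a ♯ b) := opow_le_opow_right omega0_pos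
          (nadd_le_nadd_left (succ_le_of_lt hlog) a)
  apply le_antisymm
  · rw [nmul_le_iff]
    intro x hx y hy
    have h := (nadd_key (a ♯ b)).1 _ _ (claim1 x hx) (claim2 y hy)
    exact h.trans_le le_self_nadd
  · apply le_of_forall_lt
    intro t ht
    rcases eq_or_ne t 0 with rfl | ht0
    · have : (0 : Ordinal) < ω ^ a * ω ^ b := mul_pos (opow_pos _ omega0_pos) (opow_pos _ omega0_pos)
      exact this.trans_le (mul_le_nmul _ _)
    have hlog : log ω t < a ♯ b := (lt_opow_iff_log_lt one_lt_omega0 ht0).1 ht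
    have ht2 : t < ω ^ log ω t * ω := by
      calc t < ω ^ succ (log ω t) := lt_opow_succ_log_self one_lt_omega0 t
        _ = ω ^ log ω t * ω := by rw [opow_succ]
    rcases lt_nadd_iff.1 hlog with ⟨a', ha', hle⟩ | ⟨b', hb', hle⟩
    · have ht3 : t < ω ^ (a' ♯ b) * ω :=
        ht2.trans_le (mul_le_mul_left (opow_le_opow_right omega0_pos hle) _)
      obtain ⟨m, r, hrr, hte⟩ := split ht3
      have ht4 : t < ω ^ (a' ♯ b) * ((m + 1 : ℕ) : Ordinal) := by
        rw [hte]; push_cast; rw [mul_add, mul_one]; exact add_lt_add_right hrr _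
      have step : ω ^ (a' ♯ b) * ((m + 1 : ℕ) : Ordinal) = (ω ^ a' * ((m + 1 : ℕ) : Ordinal)) ⨳ ω ^ b := by
        rw [← nmul_opow_nat (a' ♯ b), ← IHa a' ha' b, ← nmul_opow_nat a',
          nmul_assoc, nmul_assoc, nmul_comm (ω ^ b)]
      have hle2 : ω ^ a' * ((m + 1 : ℕ) : Ordinal) ≤ ω ^ a := by
        calc ω ^ a' * ((m + 1 : ℕ) : Ordinal) ≤ ω ^ a' * ω :=
              mul_le_mul_right (nat_lt_omega0 _).le _
          _ = ω ^ succ a' := by rw [opow_succ]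
          _ ≤ ω ^ a := opow_le_opow_right omega0_pos (succ_le_of_lt ha')
      calc t < ω ^ (a' ♯ b) * ((m + 1 : ℕ) : Ordinal) := ht4
        _ = (ω ^ a' * ((m + 1 : ℕ) : Ordinal)) ⨳ ω ^ b := step
        _ ≤ ω ^ a ⨳ ω ^ b := nmul_le_nmul_right hle2 _
    · have ht3 : t < ω ^ (a ♯ b') * ω :=
        ht2.trans_le (mul_le_mul_left (opow_le_opow_right omega0_pos hle) _)
      obtain ⟨m, r, hrr, hte⟩ := split ht3
      have ht4 : t < ω ^ (a ♯ b') * ((m + 1 : ℕ) : Ordinal) := by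
        rw [hte]; push_cast; rw [mul_add, mul_one]; exact add_lt_add_right hrr _
      have step : ω ^ (a ♯ b') * ((m + 1 : ℕ) : Ordinal) = ω ^ a ⨳ (ω ^ b' * ((m + 1 : ℕ) : Ordinal)) := by
        rw [← nmul_opow_nat b', ← nmul_opow_nat (a ♯ b'), ← IHb b' hb', nmul_assoc]
      have hle2 : ω ^ b' * ((m + 1 : ℕ) : Ordinal) ≤ ω ^ b := by
        calc ω ^ b' * ((m + 1 : ℕ) : Ordinal) ≤ ω ^ b' * ω :=
              mul_le_mul_right (nat_lt_omega0 _).le _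
          _ = ω ^ succ b' := by rw [opow_succ]
          _ ≤ ω ^ b := opow_le_opow_right omega0_pos (succ_le_of_lt hb')
      calc t < ω ^ (a ♯ b') * ((m + 1 : ℕ) : Ordinal) := ht4
        _ = ω ^ a ⨳ (ω ^ b' * ((m + 1 : ℕ) : Ordinal)) := step
        _ ≤ ω ^ a ⨳ ω ^ b := nmul_le_nmul_left hle2 _

/-- The product bound: if `x < ω^a` and `y < ω^b` then `x ⨳ y < ω^(a♯b)`. -/
theorem nmul_lt_omega0_opow {x y a b : Ordinal} (hx : x < ω ^ a) (hy : y < ω ^ b) :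
    x ⨳ y < ω ^ (a ♯ b) := by
  rcases eq_or_ne x 0 with rfl | hx0
  · rw [zero_nmul]; exact opow_pos _ omega0_pos
  rcases eq_or_ne y 0 with rfl | hy0
  · rw [nmul_zero]; exact opow_pos _ omega0_pos
  have hla : log ω x < a := (lt_opow_iff_log_lt one_lt_omega0 hx0).1 hx
  have hlb : log ω y < b := (lt_opow_iff_log_lt one_lt_omega0 hy0).1 hy
  have hx2 : x < ω ^ succ (log ω x) := lt_opow_succ_log_self one_lt_omega0 x
  have hy2 : y < ω ^ succ (log ω y) := lt_opow_succ_log_self one_lt_omega0 y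
  calc x ⨳ y < ω ^ succ (log ω x) ⨳ ω ^ succ (log ω y) := by
        apply (nmul_lt_nmul_of_pos_right hx2 (pos_iff_ne_zero.2 hy0)).trans_le
        exact nmul_le_nmul_left hy2.le _
    _ = ω ^ (succ (log ω x) ♯ succ (log ω y)) := nmul_omega0_opow _ _
    _ ≤ ω ^ (a ♯ b) := opow_le_opow_right omega0_pos
        (nadd_le_nadd (succ_le_of_lt hla) (succ_le_of_lt hlb))


theorem iterNmul_zero (α : Ordinal.{u}) : iterNmul α 0 = 1 :=
  limitRecOn_zero _ _ _

theorem iterNmul_succ (α β : Ordinal.{u}) : iterNmul α (succ β) = iterNmul α β ⨳ α :=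
  limitRecOn_succ _ _ _ _

theorem iterNmul_limit (α : Ordinal.{u}) {l : Ordinal.{u}} (hl : IsSuccLimit l) :
    iterNmul α l = ⨆ γ : Set.Iio l, iterNmul α γ.1 := by
  rw [iterNmul, limitRecOn_limit _ _ _ _ hl]
  rfl

theorem opow_le_iterNmul {α : Ordinal.{u}} (hα : 1 ≤ α) : ∀ β : Ordinal.{u}, α ^ β ≤ iterNmul α β := by
  have hα0 : α ≠ 0 := (zero_lt_one.trans_le hα).ne'
  intro β
  induction β using Ordinal.limitRecOn with
  | zero => rw [iterNmul_zero, opow_zero]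
  | add_one β ih =>
    rw [add_one_eq_succ, iterNmul_succ, opow_succ]
    calc α ^ β * α ≤ iterNmul α β * α := mul_le_mul_left ih α
      _ ≤ iterNmul α β ⨳ α := mul_le_nmul _ _
  | limit β hβ ih =>
    rw [iterNmul_limit α hβ]
    refine (opow_le_of_isSuccLimit hα0 hβ).2 fun β' hβ' => ?_
    exact (ih β' hβ').trans (Ordinal.le_iSup (fun γ : Set.Iio β => iterNmul α γ.1) ⟨β', hβ'⟩)

/-- If `ω^j ≤ x < ω^(succ j)` then `x * ω = ω^(succ j)`. -/
theorem mul_omega0_eq {x j : Ordinal} (h1 : ω ^ j ≤ x) (h2 : x < ω ^ succ j) :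
    x * ω = ω ^ succ j := by
  have hn : ∀ n : ℕ, x * (n : Ordinal) < ω ^ succ j := by
    intro n
    induction n with
    | zero => simpa using opow_pos (succ j) omega0_pos
    | succ n ih =>
      have : x * ((n + 1 : ℕ) : Ordinal) = x * n + x := by push_cast; rw [mul_add, mul_one]
      rw [this]
      exact principal_add_omega0_opow (succ j) ih h2
  apply le_antisymm
  · refine (mul_le_iff_of_isSuccLimit isSuccLimit_omega0).2 fun b hb => ?_
    obtain ⟨n, rfl⟩ := lt_omega0.1 hb
    exact (hn n).le
  · calc ω ^ succ j = ω ^ j * ω := by rw [opow_succ]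
      _ ≤ x * ω := mul_le_mul_left h1 ω

/-- A limit ordinal is a multiple of `ω`. -/
theorem limit_eq_omega0_mul {l : Ordinal} (hl : IsSuccLimit l) :
    l = ω * (l / ω) ∧ 0 < l / ω := by
  have hmod : l % ω < ω := mod_lt _ omega0_ne_zero
  obtain ⟨n, hn⟩ := lt_omega0.1 hmod
  have hdm := div_add_mod l ω
  rcases Nat.eq_zero_or_pos n with rfl | hn0
  · simp only [Nat.cast_zero] at hn
    rw [hn, add_zero] at hdm
    refine ⟨hdm.symm, ?_⟩
    rcases eq_zero_or_pos (l / ω) with h | h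
    · rw [h, mul_zero] at hdm
      exact absurd hdm.symm hl.pos.ne'
    · exact h
  · exfalso
    obtain ⟨m, rfl⟩ := Nat.exists_eq_succ_of_ne_zero hn0.ne'
    have : l = succ (ω * (l / ω) + (m : Ordinal)) := by
      conv_lhs => rw [← hdm, hn]
      push_cast
      rw [← add_assoc, add_one_eq_succ]
    rw [this] at hl
    exact not_isSuccLimit_succ _ hl

theorem main_eq {α : Ordinal.{u}} (hα1 : 1 < α) : ∀ l : Ordinal.{u}, IsSuccLimit l → iterNmul α l = α ^ l := by
  intro l
  induction l using Ordinal.induction with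
  | _ l IHl =>
  intro hl
  have hα0 : α ≠ 0 := (zero_lt_one.trans hα1).ne'
  obtain ⟨hlQ, hQ0⟩ := limit_eq_omega0_mul hl
  set Q := l / ω with hQdef
  -- iterNmul at multiples of ω below l agrees with opow
  have base : ∀ q, ω * q < l → iterNmul α (ω * q) = α ^ (ω * q) := by
    intro q hq
    rcases eq_zero_or_pos q with rfl | hq0
    · rw [mul_zero, iterNmul_zero, opow_zero]
    · exact IHl (ω * q) hq (isSuccLimit_mul_left isSuccLimit_omega0 hq0)
  -- decomposition of β < l
  have decomp : ∀ β < l, ∃ q, ∃ m : ℕ, β = ω * q + m ∧ q < Q ∧ ω * q < l := by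
    intro β hβ
    obtain ⟨m, hm⟩ := lt_omega0.1 (mod_lt β omega0_ne_zero)
    refine ⟨β / ω, m, by rw [← hm, div_add_mod], ?_, ?_⟩
    · have h1 : ω * (β / ω) ≤ β := by
        conv_rhs => rw [← div_add_mod β ω]
        exact le_self_add
      have h2 : ω * (β / ω) < ω * Q := by
        rw [← hlQ]; exact h1.trans_lt hβ
      exact (mul_lt_mul_iff_of_pos_left omega0_pos).1 h2
    · calc ω * (β / ω) ≤ β := by
            conv_rhs => rw [← div_add_mod β ω]
            exact le_self_add
        _ < l := hβ
  -- the upper bound: ∀ β < l, iterNmul α β ≤ α ^ l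
  have upper : ∀ β < l, iterNmul α β ≤ α ^ l := by
    rcases lt_or_ge α ω with hfin | hinf
    · -- α finite
      obtain ⟨a, rfl⟩ := lt_omega0.1 hfin
      have hpow : ∀ q, (a : Ordinal) ^ (ω * q) = ω ^ q := by
        intro q
        rw [opow_mul, opow_omega0 hα1 hfin]
      have hαl : (a : Ordinal) ^ l = ω ^ Q := by
        conv_lhs => rw [hlQ]
        exact hpow Q
      intro β hβ
      obtain ⟨q, m, rfl, hqQ, hql⟩ := decomp β hβ
      have claim : ∀ m : ℕ, ∃ c : ℕ, 0 < c ∧ iterNmul (a : Ordinal) (ω * q + m) ≤ ω ^ q * c := by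
        intro m
        induction m with
        | zero =>
          refine ⟨1, one_pos, ?_⟩
          rw [Nat.cast_zero, add_zero, base q hql, hpow q, Nat.cast_one, mul_one]
        | succ m ih =>
          obtain ⟨c, hc0, hle⟩ := ih
          obtain ⟨n, hn⟩ := lt_omega0.1 hfin
          refine ⟨c * n, ?_, ?_⟩
          · have hn1 : (1 : Ordinal) < n := by rw [← hn]; exact hα1
            have : 1 < n := by exact_mod_cast hn1
            exact Nat.mul_pos hc0 (by omega)
          · have hsucc : ω * q + ((m + 1 : ℕ) : Ordinal) = succ (ω * q + m) := by
              push_cast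
              rw [← add_assoc, add_one_eq_succ]
            rw [hsucc, iterNmul_succ]
            calc iterNmul (a : Ordinal) (ω * q + m) ⨳ (a : Ordinal)
                ≤ (ω ^ q * c) ⨳ (a : Ordinal) := nmul_le_nmul_right hle _
              _ = (ω ^ q * c) ⨳ (n : Ordinal) := by rw [hn]
              _ = (ω ^ q ⨳ (c : Ordinal)) ⨳ (n : Ordinal) := by rw [nmul_opow_nat]
              _ = ω ^ q ⨳ ((c : Ordinal) ⨳ (n : Ordinal)) := nmul_assoc _ _ _
              _ = ω ^ q ⨳ ((c * n : ℕ) : Ordinal) := by rw [nmul_nat_nat]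
              _ = ω ^ q * ((c * n : ℕ) : Ordinal) := nmul_opow_nat _ _
      obtain ⟨c, hc0, hle⟩ := claim m
      refine le_of_lt ?_
      calc iterNmul (a : Ordinal) (ω * q + m) ≤ ω ^ q * c := hle
        _ < ω ^ q * ω := (mul_lt_mul_iff_of_pos_left (opow_pos _ omega0_pos)).2 (nat_lt_omega0 c)
        _ = ω ^ succ q := by rw [opow_succ]
        _ ≤ ω ^ Q := opow_le_opow_right omega0_pos (succ_le_of_lt hqQ)
        _ = (a : Ordinal) ^ l := hαl.symm
    · -- α infinite
      set d := log ω α with hd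
      have hd0 : d ≠ 0 := by
        have : 1 ≤ d := by
          rw [← opow_le_iff_le_log one_lt_omega0 hα0, opow_one]
          exact hinf
        exact fun h => by simp [h] at this
      obtain ⟨k, hk⟩ : ∃ k, k = succ (log ω d) := ⟨_, rfl⟩
      have hdk : d < ω ^ k := by
        rw [hk]; exact lt_opow_succ_log_self one_lt_omega0 d
      have hαd : α < ω ^ succ d := lt_opow_succ_log_self one_lt_omega0 α
      have hωk_limit : IsSuccLimit (ω ^ k) := by
        rw [hk, opow_succ]
        exact isSuccLimit_mul_right (opow_pos _ omega0_pos) isSuccLimit_omega0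
      have hd1k : d + 1 < ω ^ k := by
        rw [add_one_eq_succ]
        exact hωk_limit.succ_lt hdk
      have hdω : d * ω = ω ^ k := by
        rw [hk]; exact mul_omega0_eq (opow_log_le_self ω hd0) (hk ▸ hdk)
      have hd1ω : (d + 1) * ω = ω ^ k := by
        rw [hk]
        refine mul_omega0_eq ((opow_log_le_self ω hd0).trans (le_self_add)) ?_
        rw [← hk]
        exact hd1k
      have hpow : ∀ q, α ^ (ω * q) = ω ^ (ω ^ k * q) := by
        intro q
        apply le_antisymm
        · calc α ^ (ω * q) ≤ (ω ^ succ d) ^ (ω * q) := opow_le_opow_left _ hαd.le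
            _ = ω ^ (succ d * (ω * q)) := (opow_mul _ _ _).symm
            _ = ω ^ (ω ^ k * q) := by rw [← mul_assoc, ← add_one_eq_succ, hd1ω]
        · calc ω ^ (ω ^ k * q) = ω ^ (d * (ω * q)) := by rw [← mul_assoc, hdω]
            _ = (ω ^ d) ^ (ω * q) := opow_mul _ _ _
            _ ≤ α ^ (ω * q) := opow_le_opow_left _ (opow_log_le_self ω hα0)
      have hαl : α ^ l = ω ^ (ω ^ k * Q) := by
        conv_lhs => rw [hlQ]
        exact hpow Q
      intro β hβ
      obtain ⟨q, m, rfl, hqQ, hql⟩ := decomp β hβ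
      have claim : ∀ m : ℕ, ∃ r, 0 < r ∧ r < ω ^ k ∧
          iterNmul α (ω * q + m) < ω ^ (ω ^ k * q + r) := by
        intro m
        induction m with
        | zero =>
          refine ⟨1, one_pos, one_lt_of_isSuccLimit hωk_limit, ?_⟩
          rw [Nat.cast_zero, add_zero, base q hql, hpow q]
          exact (opow_lt_opow_iff_right one_lt_omega0).2 (lt_add_one _)
        | succ m ih =>
          obtain ⟨r, hr0, hrk, hlt⟩ := ih
          refine ⟨r ♯ (d + 1), hr0.trans_le le_self_nadd, (nadd_key k).1 _ _ hrk hd1k, ?_⟩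
          have hsucc : ω * q + ((m + 1 : ℕ) : Ordinal) = succ (ω * q + m) := by
            push_cast
            rw [← add_assoc, add_one_eq_succ]
          rw [hsucc, iterNmul_succ]
          have hstep : iterNmul α (ω * q + m) ⨳ α < ω ^ ((ω ^ k * q + r) ♯ succ d) := by
            exact nmul_lt_omega0_opow hlt hαd
          have hexp : (ω ^ k * q + r) ♯ succ d = ω ^ k * q + (r ♯ (d + 1)) := by
            have := (nadd_key k).2 q 0 r (d + 1) hrk hd1k
            rw [← add_one_eq_succ]
            simpa [mul_zero] using this
          rwa [hexp] at hstep
      obtain ⟨r, hr0, hrk, hlt⟩ := claim m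
      refine le_of_lt ?_
      calc iterNmul α (ω * q + m) < ω ^ (ω ^ k * q + r) := hlt
        _ ≤ ω ^ (ω ^ k * q + ω ^ k) := opow_le_opow_right omega0_pos (add_le_add_right hrk.le _)
        _ = ω ^ (ω ^ k * succ q) := by rw [mul_succ]
        _ ≤ ω ^ (ω ^ k * Q) := opow_le_opow_right omega0_pos
            (mul_le_mul_right (succ_le_of_lt hqQ) _)
        _ = α ^ l := hαl.symm
  -- combine
  apply le_antisymm
  · rw [iterNmul_limit α hl]
    exact Ordinal.iSup_le fun γ => upper γ.1 γ.2
  · rw [iterNmul_limit α hl]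
    refine (opow_le_of_isSuccLimit hα0 hl).2 fun β hβ => ?_
    exact (opow_le_iterNmul hα1.le β).trans
      (Ordinal.le_iSup (fun γ : Set.Iio l => iterNmul α γ.1) ⟨β, hβ⟩)

theorem iterNmul_one_left : ∀ β : Ordinal.{u}, iterNmul (1 : Ordinal.{u}) β = 1 := by
  intro β
  induction β using Ordinal.limitRecOn with
  | zero => exact iterNmul_zero 1
  | add_one β ih => rw [add_one_eq_succ, iterNmul_succ, ih, nmul_one]
  | limit β hβ ih =>
    rw [iterNmul_limit 1 hβ]
    apply le_antisymm
    · exact Ordinal.iSup_le fun γ => (ih γ.1 γ.2).le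
    · have h0 := Ordinal.le_iSup (fun γ : Set.Iio β => iterNmul 1 γ.1) ⟨0, hβ.pos⟩
      rw [iterNmul_zero] at h0
      exact h0


end IterNmulProof

/-- Let `α ≥ 1` be an ordinal and `λ` a limit ordinal. Then `α^{⊙λ} = α^λ`,
and moreover `α^λ` is additively closed. -/
theorem iterNmul_limit_eq_opow_and_additively_closed
    (α : Ordinal) (hα : 1 ≤ α) (l : Ordinal) (hl : Order.IsSuccLimit l) :
    iterNmul α l = α ^ l ∧ ∀ γ δ : Ordinal, γ < α ^ l → δ < α ^ l → γ + δ < α ^ l := by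
  open IterNmulProof in
  rcases eq_or_lt_of_le hα with rfl | hα1
  · refine ⟨by rw [iterNmul_one_left, one_opow], fun γ δ hγ hδ => ?_⟩
    rw [one_opow] at hγ hδ ⊢
    rw [Ordinal.lt_one_iff_zero] at hγ hδ
    rw [hγ, hδ, add_zero]
    exact zero_lt_one
  · have hα0 : α ≠ 0 := (zero_lt_one.trans hα1).ne'
    refine ⟨main_eq hα1 l hl, fun γ δ hγ hδ => ?_⟩
    obtain ⟨b, hb, hγb⟩ := (lt_opow_of_isSuccLimit hα0 hl).1 hγ
    obtain ⟨c, hc, hδc⟩ := (lt_opow_of_isSuccLimit hα0 hl).1 hδ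
    have hγe : γ < α ^ max b c :=
      hγb.trans_le (opow_le_opow_right (zero_lt_one.trans hα1) (le_max_left _ _))
    have hδe : δ < α ^ max b c :=
      hδc.trans_le (opow_le_opow_right (zero_lt_one.trans hα1) (le_max_right _ _))
    have h2α : (2 : Ordinal) ≤ α := by
      rw [← Ordinal.succ_one]
      exact Order.succ_le_of_lt hα1
    calc γ + δ ≤ α ^ max b c + δ := add_le_add_left hγe.le _
      _ < α ^ max b c + α ^ max b c := add_lt_add_right hδe _
      _ = α ^ max b c * 2 := by
          rw [← one_add_one_eq_two, mul_add, mul_one]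
      _ ≤ α ^ max b c * α := mul_le_mul_right h2α _
      _ = α ^ succ (max b c) := by rw [opow_succ]
      _ ≤ α ^ l := opow_le_opow_right (zero_lt_one.trans hα1)
          (hl.succ_lt (max_lt hb hc)).le
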